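/- For the three-parameter qubit model, with block-diagonal weight W(3) = diag(W, w₃), the quantity TrAbs(W(3)·Im G̃(3)⁻¹) equals 2√(w₃ g³³)·√(Tr(W(G⁻¹ − G̃⁻¹))), where g³³ = 1/θ₁², G⁻¹ = (1−θ₁², −θ₁θ₂; −θ₁θ₂, 1−θ₂²), G̃⁻¹ = (1−θ₁²−θ₂²)I₂, and Im G̃(3)⁻¹ has entries (1,3) = −θ₂/θ₁, (2,3) = 1, (3,1) = θ₂/θ₁, (3,2) = −1, zeros elsewhere. -/

import Mathlib

open Matrix

/-- The square root of a positive semidefinite matrix, with the definition it had in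
Mathlib (December 2024), where it was `Matrix.PosSemidef.sqrt`; it has since been removed. -/
noncomputable def Matrix.PosSemidef.sqrt {n 𝕜 : Type*} [Fintype n] [RCLike 𝕜] [PartialOrder 𝕜]
    [DecidableEq n]
    {A : Matrix n n 𝕜} (hA : A.PosSemidef) : Matrix n n 𝕜 :=
  (hA.1.eigenvectorUnitary : Matrix n n 𝕜) *
    diagonal (fun i => ((√(hA.1.eigenvalues i) : ℝ) : 𝕜)) *
    (star hA.1.eigenvectorUnitary : Matrix n n 𝕜)

/-- The antisymmetric matrix `Im G̃(3)⁻¹`. -/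
noncomputable def imRld3 (θ₁ θ₂ : ℝ) : Matrix (Fin 3) (Fin 3) ℝ :=
  !![0, 0, -(θ₂ / θ₁); 0, 0, 1; θ₂ / θ₁, -1, 0]

open scoped MatrixOrder in
private lemma psd_sqrt_eq_cfc {A : Matrix (Fin 3) (Fin 3) ℝ} (hA : A.PosSemidef) :
    hA.sqrt = CFC.sqrt A := by
  rw [CFC.sqrt_eq_real_sqrt A hA.nonneg, cfcₙ_eq_cfc, Matrix.IsHermitian.cfc_eq hA.1]
  rfl

open scoped MatrixOrder in
private lemma Matrix.PosSemidef.sqrt_mul_self {A : Matrix (Fin 3) (Fin 3) ℝ} (hA : A.PosSemidef) :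
    hA.sqrt * hA.sqrt = A := by
  rw [psd_sqrt_eq_cfc]
  exact CFC.sqrt_mul_sqrt_self A hA.nonneg

open scoped MatrixOrder in
private lemma Matrix.PosSemidef.eq_sqrt_of_sq_eq {A B : Matrix (Fin 3) (Fin 3) ℝ}
    (hA : A.PosSemidef) (hB : B.PosSemidef) (h : A ^ 2 = B) : A = hB.sqrt := by
  rw [psd_sqrt_eq_cfc]
  exact (CFC.sqrt_unique (by rw [← pow_two]; exact h) hA.nonneg).symm

private lemma key_aux (θ₁ θ₂ : ℝ) (h1 : θ₁ ≠ 0) (W : Matrix (Fin 2) (Fin 2) ℝ) (w₃ : ℝ) :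
    imRld3 θ₁ θ₂ * (!![W 0 0, W 0 1, 0; W 1 0, W 1 1, 0; 0, 0, w₃] :
      Matrix (Fin 3) (Fin 3) ℝ) * imRld3 θ₁ θ₂ *
      (!![W 0 0, W 0 1, 0; W 1 0, W 1 1, 0; 0, 0, w₃]) * imRld3 θ₁ θ₂ =
    (-(w₃ * (θ₂^2*W 0 0 - θ₁*θ₂*W 0 1 - θ₁*θ₂*W 1 0 + θ₁^2*W 1 1) / θ₁^2)) • imRld3 θ₁ θ₂ := by
  ext i j
  fin_cases i <;> fin_cases j <;>
    (simp [imRld3, Matrix.mul_apply, Fin.sum_univ_succ]; try field_simp; try ring)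

private lemma tr_aux (θ₁ θ₂ : ℝ) (h1 : θ₁ ≠ 0) (W : Matrix (Fin 2) (Fin 2) ℝ) (w₃ : ℝ) :
    ((!![W 0 0, W 0 1, 0; W 1 0, W 1 1, 0; 0, 0, w₃] : Matrix (Fin 3) (Fin 3) ℝ) *
      (imRld3 θ₁ θ₂ * (!![W 0 0, W 0 1, 0; W 1 0, W 1 1, 0; 0, 0, w₃]) *
        imRld3 θ₁ θ₂)).trace =
    -(2*(w₃ * (θ₂^2*W 0 0 - θ₁*θ₂*W 0 1 - θ₁*θ₂*W 1 0 + θ₁^2*W 1 1) / θ₁^2)) := by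
  simp [imRld3, Matrix.trace, Matrix.mul_apply, Fin.sum_univ_succ, Matrix.diag]
  field_simp
  ring

set_option maxHeartbeats 1000000 in
/-- For the three-parameter qubit model with block-diagonal weight
`W(3) = diag(W, w₃)`, with `TrAbs` computed as `Tr √(−B²)` for
`B = √W(3) · Im G̃(3)⁻¹ · √W(3)`, one has
`TrAbs(W(3)·Im G̃(3)⁻¹) = 2√(w₃ g³³)·√(Tr(W(G⁻¹ − G̃⁻¹)))` with `g³³ = 1/θ₁²`,
`G⁻¹ = (1−θ₁², −θ₁θ₂; −θ₁θ₂, 1−θ₂²)` and `G̃⁻¹ = (1−θ₁²−θ₂²)I₂`. -/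
theorem stmt16 (θ₁ θ₂ : ℝ) (h1 : θ₁ ≠ 0) (h : θ₁ ^ 2 + θ₂ ^ 2 < 1)
    (W : Matrix (Fin 2) (Fin 2) ℝ) (hW : W.PosDef) (w₃ : ℝ) (hw : 0 < w₃)
    (hW3 : (!![W 0 0, W 0 1, 0; W 1 0, W 1 1, 0; 0, 0, w₃] :
      Matrix (Fin 3) (Fin 3) ℝ).PosDef)
    (hB : (-(hW3.posSemidef.sqrt * imRld3 θ₁ θ₂ * hW3.posSemidef.sqrt *
      (hW3.posSemidef.sqrt * imRld3 θ₁ θ₂ * hW3.posSemidef.sqrt))).PosSemidef) :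
    hB.sqrt.trace =
      2 * Real.sqrt (w₃ * (1 / θ₁ ^ 2)) *
        Real.sqrt ((W * ((!![1 - θ₁ ^ 2, -(θ₁ * θ₂); -(θ₁ * θ₂), 1 - θ₂ ^ 2] :
            Matrix (Fin 2) (Fin 2) ℝ) -
          (1 - θ₁ ^ 2 - θ₂ ^ 2) • (1 : Matrix (Fin 2) (Fin 2) ℝ))).trace) := by
  set W3 : Matrix (Fin 3) (Fin 3) ℝ := !![W 0 0, W 0 1, 0; W 1 0, W 1 1, 0; 0, 0, w₃] with hW3def
  set A : Matrix (Fin 3) (Fin 3) ℝ := imRld3 θ₁ θ₂ with hAdef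
  set R : Matrix (Fin 3) (Fin 3) ℝ := hW3.posSemidef.sqrt with hRdef
  set k : ℝ := θ₂^2*W 0 0 - θ₁*θ₂*W 0 1 - θ₁*θ₂*W 1 0 + θ₁^2*W 1 1 with hkdef
  -- the trace on the RHS equals k
  have hk : ((W * ((!![1 - θ₁ ^ 2, -(θ₁ * θ₂); -(θ₁ * θ₂), 1 - θ₂ ^ 2] :
            Matrix (Fin 2) (Fin 2) ℝ) -
          (1 - θ₁ ^ 2 - θ₂ ^ 2) • (1 : Matrix (Fin 2) (Fin 2) ℝ))).trace) = k := by
    simp [Matrix.trace, Matrix.mul_apply, Fin.sum_univ_succ, Matrix.one_apply, hkdef]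
    ring
  have hkpos : 0 < k := by
    have hv : (![θ₂, -θ₁] : Fin 2 → ℝ) ≠ 0 := by
      intro hv0
      have := congrFun hv0 1
      simp at this
      exact h1 this
    have h2 := hW.dotProduct_mulVec_pos hv
    have h3 : dotProduct (star ![θ₂, -θ₁]) (W *ᵥ ![θ₂, -θ₁]) = k := by
      simp [dotProduct, Matrix.mulVec, Fin.sum_univ_succ, hkdef]
      ring
    linarith [h3 ▸ h2]
  set μ : ℝ := Real.sqrt (w₃ * k / θ₁ ^ 2) with hμdef
  have hc : 0 < w₃ * k / θ₁ ^ 2 := by positivity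
  have hμpos : 0 < μ := Real.sqrt_pos.2 hc
  have hμsq : μ ^ 2 = w₃ * k / θ₁ ^ 2 := Real.sq_sqrt hc.le
  have hRR : R * R = W3 := hW3.posSemidef.sqrt_mul_self
  -- key cubic identity
  have key : A * W3 * A * W3 * A = (-(w₃ * k / θ₁ ^ 2)) • A :=
    key_aux θ₁ θ₂ h1 W w₃
  set C : Matrix (Fin 3) (Fin 3) ℝ := R * A * R with hCdef
  have hCC : C * C = R * (A * W3 * A) * R := by
    rw [hCdef, show (R*A*R)*(R*A*R) = R*(A*(R*R)*A)*R by noncomm_ring, hRR]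
  have hkey2 : (A * W3 * A) * W3 * (A * W3 * A)
      = (-(w₃ * k / θ₁ ^ 2)) • (A * W3 * A) := by
    calc (A*W3*A)*W3*(A*W3*A) = (A*W3*A*W3*A)*(W3*A) := by noncomm_ring
    _ = ((-(w₃ * k / θ₁ ^ 2)) • A)*(W3*A) := by rw [key]
    _ = (-(w₃ * k / θ₁ ^ 2)) • (A*W3*A) := by
        rw [Matrix.smul_mul, Matrix.mul_assoc]
  have hC4 : (C*C)*(C*C) = (-(w₃ * k / θ₁ ^ 2)) • (C*C) := by
    rw [hCC]
    calc (R*(A*W3*A)*R)*(R*(A*W3*A)*R) = R*((A*W3*A)*(R*R)*(A*W3*A))*R := by noncomm_ring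
    _ = R*((A*W3*A)*W3*(A*W3*A))*R := by rw [hRR]
    _ = R*((-(w₃ * k / θ₁ ^ 2)) • (A*W3*A))*R := by rw [hkey2]
    _ = (-(w₃ * k / θ₁ ^ 2)) • (R*(A*W3*A)*R) := by
        rw [Matrix.mul_smul, Matrix.smul_mul]
  set S : Matrix (Fin 3) (Fin 3) ℝ := μ⁻¹ • (-(C*C)) with hSdef
  have hSsq : S ^ 2 = -(C * C) := by
    rw [hSdef, pow_two, Matrix.smul_mul, Matrix.mul_smul, smul_smul,
      neg_mul_neg, hC4, smul_smul]
    have : μ⁻¹ * μ⁻¹ * -(w₃ * k / θ₁ ^ 2) = -1 := by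
      rw [← hμsq]
      field_simp [pow_two]
    rw [this, neg_one_smul]
  have hS : S.PosSemidef := by
    constructor
    · show Sᴴ = S
      rw [hSdef, conjTranspose_smul, hB.1]
      simp
    · intro x
      have h0 := hB.2 x
      rw [hSdef]
      exact (hB.smul (inv_nonneg.2 hμpos.le)).2 x
  have hsqrt : S = hB.sqrt := hS.eq_sqrt_of_sq_eq hB hSsq
  rw [← hsqrt, hk]
  -- compute the trace of S
  have htr : (W3 * (A * W3 * A)).trace = -(2*(w₃ * k / θ₁ ^ 2)) := by
    rw [hW3def, hAdef, hkdef]; exact tr_aux θ₁ θ₂ h1 W w₃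
  have htrS : S.trace = 2 * μ := by
    rw [hSdef, Matrix.trace_smul, Matrix.trace_neg, hCC]
    have : (R * (A * W3 * A) * R).trace = (W3 * (A * W3 * A)).trace := by
      rw [Matrix.trace_mul_comm, ← Matrix.mul_assoc, hRR]
    rw [this, htr]
    have hμne : μ ≠ 0 := ne_of_gt hμpos
    have : w₃ * k / θ₁ ^ 2 = μ ^ 2 := hμsq.symm
    rw [this]
    field_simp [pow_two]
    simp only [smul_eq_mul, one_div, pow_two, mul_assoc, inv_mul_cancel_left₀ hμne]
  rw [htrS, hμdef, mul_assoc,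
    ← Real.sqrt_mul (by positivity : (0:ℝ) ≤ w₃ * (1 / θ₁ ^ 2)) k]
  congr 1
  ring
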